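/- Let φ : (0,∞) → (0,∞) be continuous and strictly increasing with φ(0⁺) = 0, φ(1) = 1, φ(∞) = ∞, and let μ_i, μ be nonzero finite Borel measures on S^{n-1}, none concentrated on any closed hemisphere, with μ_i → μ weakly. Define Ĝ_φ(ν) = inf{ ∫ φ(h_L) dν : L a convex body with origin interior and |L°| = ω_n }. Then Ĝ_φ(μ_i) → Ĝ_φ(μ). -/

import Mathlib

open MeasureTheory Metric Filter Set ENNReal

noncomputable section

abbrev E (n : ℕ) := EuclideanSpace ℝ (Fin n)

abbrev Sph (n : ℕ) := ↥(Metric.sphere (0 : E n) 1)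

/-- Convex body in `ℝⁿ` with the origin in its interior. -/
def IsBody {n : ℕ} (K : Set (E n)) : Prop :=
  IsCompact K ∧ Convex ℝ K ∧ 0 ∈ interior K

/-- Support function of a set. -/
def supportFn {n : ℕ} (K : Set (E n)) (u : E n) : ℝ :=
  sSup ((fun x => (inner ℝ x u : ℝ)) '' K)

/-- Polar body. -/
def polarBody {n : ℕ} (K : Set (E n)) : Set (E n) :=
  {y | ∀ x ∈ K, (inner ℝ x y : ℝ) ≤ 1}

/-- Radial function. -/
def radialFn {n : ℕ} (K : Set (E n)) (u : E n) : ℝ :=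
  sSup {r : ℝ | 0 ≤ r ∧ r • u ∈ K}

/-- Volume of the unit ball in `ℝⁿ`. -/
def unitBallVol (n : ℕ) : ℝ≥0∞ := volume (Metric.closedBall (0 : E n) 1)

/-- The infimum `Ĝ_φ(ν)` of `∫ φ(h_L) dν` over convex bodies `L` with `|L°| = ω_n`. -/
def Ghat {n : ℕ} (φ : ℝ → ℝ) (ν : Measure (Sph n)) : ℝ :=
  sInf {x : ℝ | ∃ L : Set (E n), IsBody L ∧ volume (polarBody L) = unitBallVol n ∧
    x = ∫ u : Sph n, φ (supportFn L (u : E n)) ∂ν}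

variable {n : ℕ}

lemma bddAbove_inner_img {K : Set (E n)} (hK : IsCompact K) (u : E n) :
    BddAbove ((fun x => (inner ℝ x u : ℝ)) '' K) :=
  (hK.image (continuous_id.inner continuous_const)).bddAbove

lemma inner_le_supportFn {K : Set (E n)} (hK : IsCompact K) {x : E n} (hx : x ∈ K) (u : E n) :
    (inner ℝ x u : ℝ) ≤ supportFn K u :=
  le_csSup (bddAbove_inner_img hK u) (mem_image_of_mem _ hx)

lemma supportFn_le {K : Set (E n)} (hne : K.Nonempty) {u : E n} {c : ℝ}
    (h : ∀ x ∈ K, (inner ℝ x u : ℝ) ≤ c) : supportFn K u ≤ c :=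
  csSup_le (hne.image _) (by rintro y ⟨x, hx, rfl⟩; exact h x hx)

lemma IsBody.nonempty {K : Set (E n)} (hK : IsBody K) : K.Nonempty :=
  ⟨0, interior_subset hK.2.2⟩

lemma IsBody.exists_ball {K : Set (E n)} (hK : IsBody K) :
    ∃ ε > 0, closedBall (0 : E n) ε ⊆ K := by
  obtain ⟨ε, hε, h⟩ := Metric.mem_nhds_iff.mp (mem_interior_iff_mem_nhds.mp hK.2.2)
  exact ⟨ε/2, by positivity, (closedBall_subset_ball (by linarith)).trans h⟩

lemma IsBody.exists_radius {K : Set (E n)} (hK : IsBody K) :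
    ∃ R > 0, K ⊆ closedBall (0 : E n) R := by
  obtain ⟨R, hR⟩ := hK.1.isBounded.subset_closedBall 0
  exact ⟨max R 1, lt_of_lt_of_le one_pos (le_max_right _ _),
    hR.trans (closedBall_subset_closedBall (le_max_left _ _))⟩

lemma supportFn_ge_of_ball {K : Set (E n)} (hK : IsCompact K) {ε : ℝ} (hε : 0 < ε)
    (hb : closedBall (0 : E n) ε ⊆ K) {u : E n} (hu : ‖u‖ = 1) :
    ε ≤ supportFn K u := by
  have h1 : (inner ℝ (ε • u) u : ℝ) = ε := by
    rw [real_inner_smul_left, real_inner_self_eq_norm_sq, hu]; ring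
  have h2 : ε • u ∈ K := hb (by simp [mem_closedBall, norm_smul, hu, abs_of_pos hε])
  simpa [h1] using inner_le_supportFn hK h2 u

lemma supportFn_le_of_radius {K : Set (E n)} (hne : K.Nonempty) {R : ℝ}
    (hb : K ⊆ closedBall (0 : E n) R) {u : E n} (hu : ‖u‖ = 1) :
    supportFn K u ≤ R := by
  refine supportFn_le hne fun x hx => ?_
  calc (inner ℝ x u : ℝ) ≤ ‖x‖ * ‖u‖ := real_inner_le_norm x u
    _ ≤ R := by have := mem_closedBall_zero_iff.mp (hb hx); rw [hu]; nlinarith [norm_nonneg x]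

lemma supportFn_lipschitz {K : Set (E n)} (hK : IsCompact K) (hne : K.Nonempty) {R : ℝ}
    (hb : K ⊆ closedBall (0 : E n) R) (u v : E n) :
    supportFn K u - supportFn K v ≤ R * ‖u - v‖ := by
  have h : ∀ x ∈ K, (inner ℝ x u : ℝ) ≤ supportFn K v + R * ‖u - v‖ := by
    intro x hx
    have h1 : (inner ℝ x u : ℝ) = inner ℝ x v + inner ℝ x (u - v) := by
      have := inner_sub_right (𝕜 := ℝ) x u v
      linarith
    have h2 : (inner ℝ x (u - v) : ℝ) ≤ R * ‖u - v‖ := by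
      calc (inner ℝ x (u - v) : ℝ) ≤ ‖x‖ * ‖u - v‖ := real_inner_le_norm _ _
        _ ≤ R * ‖u - v‖ := by
          have hx' := mem_closedBall_zero_iff.mp (hb hx)
          exact mul_le_mul_of_nonneg_right hx' (norm_nonneg _)
    have := inner_le_supportFn hK hx v
    linarith [h1 ▸ (by linarith : (inner ℝ x v : ℝ) + (inner ℝ x (u - v) : ℝ) ≤ supportFn K v + R * ‖u - v‖)]
  linarith [supportFn_le hne h]

lemma supportFn_continuous {K : Set (E n)} (hK : IsCompact K) (hne : K.Nonempty) :
    Continuous (supportFn K) := by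
  obtain ⟨R, hR⟩ := hK.isBounded.subset_closedBall 0
  have : LipschitzWith (Real.toNNReal R) (supportFn K) := by
    refine LipschitzWith.of_dist_le_mul fun u v => ?_
    rw [Real.dist_eq, abs_sub_le_iff]
    have h1 := supportFn_lipschitz hK hne hR u v
    have h2 := supportFn_lipschitz hK hne hR v u
    have hRle : R ≤ (Real.toNNReal R : ℝ) := Real.le_coe_toNNReal R
    have hn : ‖u - v‖ = dist u v := (dist_eq_norm u v).symm
    have hn' : ‖v - u‖ = dist u v := by rw [dist_comm]; exact (dist_eq_norm v u).symm
    rw [hn] at h1; rw [hn'] at h2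
    have hmul : R * dist u v ≤ (Real.toNNReal R : ℝ) * dist u v :=
      mul_le_mul_of_nonneg_right hRle dist_nonneg
    constructor <;> linarith
  exact this.continuous

lemma supportFn_closedBall_one {u : E n} (hu : ‖u‖ = 1) :
    supportFn (closedBall (0 : E n) 1) u = 1 := by
  refine le_antisymm (supportFn_le_of_radius ⟨0, by simp⟩ (subset_refl _) hu) ?_
  simpa using supportFn_ge_of_ball (isCompact_closedBall _ _) one_pos (subset_refl _) hu

lemma polarBody_closedBall_one : polarBody (closedBall (0 : E n) 1) = closedBall (0 : E n) 1 := by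
  ext y
  constructor
  · intro h
    rcases eq_or_ne y 0 with rfl | hy
    · simp
    · have h1 : (‖y‖⁻¹ • y) ∈ closedBall (0 : E n) 1 := by
        rw [mem_closedBall_zero_iff, norm_smul, norm_inv, norm_norm,
          inv_mul_cancel₀ (norm_ne_zero_iff.mpr hy)]
      have h2 : (inner ℝ (‖y‖⁻¹ • y) y : ℝ) ≤ 1 := h _ h1
      rw [real_inner_smul_left, real_inner_self_eq_norm_sq] at h2
      have hy' : (0:ℝ) < ‖y‖ := norm_pos_iff.mpr hy
      rw [mem_closedBall_zero_iff]
      calc ‖y‖ = ‖y‖⁻¹ * ‖y‖^2 := by field_simp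
        _ ≤ 1 := h2
  · intro h x hx
    calc (inner ℝ x y : ℝ) ≤ ‖x‖ * ‖y‖ := real_inner_le_norm _ _
      _ ≤ 1 := by
        have h1 := mem_closedBall_zero_iff.mp hx
        have h2 := mem_closedBall_zero_iff.mp h
        nlinarith [norm_nonneg x, norm_nonneg y]

lemma isBody_closedBall : IsBody (closedBall (0 : E n) 1) :=
  ⟨isCompact_closedBall _ _, convex_closedBall _ _, by
    rw [interior_closedBall _ one_ne_zero]; exact mem_ball_self one_pos⟩

lemma sph_norm (u : Sph n) : ‖(u : E n)‖ = 1 := by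
  have := u.2; rwa [mem_sphere_zero_iff_norm] at this

lemma supportFn_pos_on_sph {L : Set (E n)} (hL : IsBody L) (u : Sph n) :
    0 < supportFn L (u : E n) := by
  obtain ⟨ε, hε, hb⟩ := hL.exists_ball
  exact lt_of_lt_of_le hε (supportFn_ge_of_ball hL.1 hε hb (sph_norm u))

lemma integrand_continuous {φ : ℝ → ℝ} (hφc : ContinuousOn φ (Ioi 0)) {L : Set (E n)}
    (hL : IsBody L) : Continuous (fun u : Sph n => φ (supportFn L (u : E n))) := by
  rw [continuous_iff_continuousAt]
  intro u
  have h1 : ContinuousAt φ (supportFn L (u : E n)) :=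
    hφc.continuousAt (Ioi_mem_nhds (supportFn_pos_on_sph hL u))
  have h2 : ContinuousAt (fun u : Sph n => supportFn L (u : E n)) u :=
    ((supportFn_continuous hL.1 hL.nonempty).comp continuous_subtype_val).continuousAt
  exact ContinuousAt.comp (g := φ) (f := fun u : Sph n => supportFn L (u : E n)) h1 h2

lemma hasCompactSupport_of_compactSpace {α β : Type*} [TopologicalSpace α] [CompactSpace α]
    [Zero β] (f : α → β) : HasCompactSupport f :=
  IsCompact.of_isClosed_subset CompactSpace.isCompact_univ (isClosed_tsupport _) (subset_univ _)

lemma integrand_integrable {φ : ℝ → ℝ} (hφc : ContinuousOn φ (Ioi 0)) {L : Set (E n)}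
    (hL : IsBody L) (ν : Measure (Sph n)) [IsFiniteMeasure ν] :
    Integrable (fun u : Sph n => φ (supportFn L (u : E n))) ν :=
  (integrand_continuous hφc hL).integrable_of_hasCompactSupport
    (hasCompactSupport_of_compactSpace _)

variable {φ : ℝ → ℝ}

lemma GhatSet_nonempty (ν : Measure (Sph n)) :
    {x : ℝ | ∃ L : Set (E n), IsBody L ∧ volume (polarBody L) = unitBallVol n ∧
      x = ∫ u : Sph n, φ (supportFn L (u : E n)) ∂ν}.Nonempty :=
  ⟨_, closedBall (0 : E n) 1, isBody_closedBall, by rw [polarBody_closedBall_one]; rfl, rfl⟩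

lemma GhatSet_mem_nonneg (hφpos : ∀ t ∈ Ioi (0:ℝ), 0 < φ t) (ν : Measure (Sph n)) {x : ℝ}
    (hx : x ∈ {x : ℝ | ∃ L : Set (E n), IsBody L ∧ volume (polarBody L) = unitBallVol n ∧
      x = ∫ u : Sph n, φ (supportFn L (u : E n)) ∂ν}) : 0 ≤ x := by
  obtain ⟨L, hL, -, rfl⟩ := hx
  exact integral_nonneg fun u => (hφpos _ (supportFn_pos_on_sph hL u)).le

lemma GhatSet_bddBelow (hφpos : ∀ t ∈ Ioi (0:ℝ), 0 < φ t) (ν : Measure (Sph n)) :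
    BddBelow {x : ℝ | ∃ L : Set (E n), IsBody L ∧ volume (polarBody L) = unitBallVol n ∧
      x = ∫ u : Sph n, φ (supportFn L (u : E n)) ∂ν} :=
  ⟨0, fun x hx => GhatSet_mem_nonneg hφpos ν hx⟩

lemma Ghat_nonneg (hφpos : ∀ t ∈ Ioi (0:ℝ), 0 < φ t) (ν : Measure (Sph n)) : 0 ≤ Ghat φ ν :=
  le_csInf (GhatSet_nonempty ν) fun _ hx => GhatSet_mem_nonneg hφpos ν hx

lemma Ghat_le (ν : Measure (Sph n)) {L : Set (E n)} (hL : IsBody L)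
    (hvol : volume (polarBody L) = unitBallVol n) (hφpos : ∀ t ∈ Ioi (0:ℝ), 0 < φ t) :
    Ghat φ ν ≤ ∫ u : Sph n, φ (supportFn L (u : E n)) ∂ν :=
  csInf_le (GhatSet_bddBelow hφpos ν) ⟨L, hL, hvol, rfl⟩

lemma Ghat_le_measure (hφ1 : φ 1 = 1) (hφpos : ∀ t ∈ Ioi (0:ℝ), 0 < φ t)
    (ν : Measure (Sph n)) : Ghat φ ν ≤ (ν univ).toReal := by
  have h := Ghat_le (φ := φ) ν isBody_closedBall
    (by rw [polarBody_closedBall_one]; rfl) hφpos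
  have h2 : (∫ u : Sph n, φ (supportFn (closedBall (0:E n) 1) (u : E n)) ∂ν)
      = (ν univ).toReal := by
    rw [show (fun u : Sph n => φ (supportFn (closedBall (0:E n) 1) (u : E n))) = fun _ => (1:ℝ)
      from funext fun u => by rw [supportFn_closedBall_one (sph_norm u), hφ1]]
    simp
    rfl
  linarith [h2 ▸ h]

-- polar body contains small balls along a direction where supportFn is small
lemma ball_subset_polar {n : ℕ} {L : Set (E n)} {R h c : ℝ} (hR : 0 < R)
    (hsub : L ⊆ closedBall (0 : E n) R) {u : E n} (hu : ‖u‖ = 1)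
    (hh : ∀ x ∈ L, (inner ℝ x u : ℝ) ≤ h) (hhpos : 0 < h) (hc : 0 ≤ c) (hch : c * h ≤ 1/2) :
    closedBall (c • u) (1/(2*R)) ⊆ polarBody L := by
  intro z hz
  intro x hx
  have h1 : (inner ℝ x z : ℝ) = c * (inner ℝ x u : ℝ) + inner ℝ x (z - c • u) := by
    rw [inner_sub_right, real_inner_smul_right]; ring
  have h2 : (inner ℝ x (z - c • u) : ℝ) ≤ ‖x‖ * ‖z - c • u‖ := real_inner_le_norm _ _
  have hxR : ‖x‖ ≤ R := mem_closedBall_zero_iff.mp (hsub hx)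
  have hzc : ‖z - c • u‖ ≤ 1/(2*R) := by
    have := mem_closedBall_iff_norm.mp hz; linarith
  have h3 : ‖x‖ * ‖z - c • u‖ ≤ R * (1/(2*R)) := by
    apply mul_le_mul hxR hzc (norm_nonneg _) hR.le
  have h4 : R * (1/(2*R)) = 1/2 := by field_simp
  have h5 : c * (inner ℝ x u : ℝ) ≤ c * h := mul_le_mul_of_nonneg_left (hh x hx) hc
  linarith

lemma supportFn_min_bound {n : ℕ} (hn : 0 < n) {L : Set (E n)} {R h : ℝ} (hR : 0 < R)
    (hRn : R ≥ 1) (hsub : L ⊆ closedBall (0 : E n) R)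
    (hvol : volume (polarBody L) = unitBallVol n) {u : E n} (hu : ‖u‖ = 1)
    (hh : ∀ x ∈ L, (inner ℝ x u : ℝ) ≤ h) (hhpos : 0 < h) :
    R * (1/(4*R))^n / 2 ≤ h := by
  by_contra hcon
  push_neg at hcon
  set D : ℝ := 1/h with hD
  have hDpos : 0 < D := by positivity
  set N : ℕ := ⌊D * R / 2⌋₊ + 1 with hN
  have hNge : D * R / 2 ≤ N := by
    have := Nat.lt_floor_add_one (D * R / 2)
    rw [hN]; push_cast; linarith
  -- the balls
  set r : ℝ := 1/(4*R) with hr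
  have hrpos : 0 < r := by positivity
  set B : ℕ → Set (E n) := fun k => closedBall ((k * (1/R)) • u) r with hB
  have hBsub : ∀ k < N, B k ⊆ polarBody L := by
    intro k hk
    have hc : (0:ℝ) ≤ k * (1/R) := by positivity
    have hch : (k * (1/R)) * h ≤ 1/2 := by
      have hk' : (k:ℝ) ≤ N - 1 := by
        have : (k:ℝ) + 1 ≤ N := by exact_mod_cast Nat.succ_le_of_lt hk
        linarith
      have hfloor : (N:ℝ) - 1 ≤ D * R / 2 := by
        have h0 := Nat.floor_le (by positivity : (0:ℝ) ≤ D * R / 2)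
        rw [hN]
        push_cast
        linarith
      have hkD : (k:ℝ) ≤ D * R / 2 := le_trans hk' hfloor
      have hDh : D * h = 1 := by rw [hD, one_div, inv_mul_cancel₀ hhpos.ne']
      have h2 : (k:ℝ) * ((1/R) * h) ≤ (D * R / 2) * ((1/R) * h) :=
        mul_le_mul_of_nonneg_right hkD (by positivity)
      have h3 : (D * R / 2) * ((1/R) * h) = (D * h) / 2 := by field_simp
      calc (k * (1/R)) * h = (k:ℝ) * ((1/R) * h) := by ring
        _ ≤ (D * R / 2) * ((1/R) * h) := h2
        _ = 1/2 := by rw [h3, hDh]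
    refine (closedBall_subset_closedBall ?_).trans
      (ball_subset_polar hR hsub hu hh hhpos hc hch)
    rw [hr]
    apply div_le_div_of_nonneg_left one_pos.le (by positivity) (by linarith)
  have hdisj : (Finset.range N : Set ℕ).PairwiseDisjoint B := by
    intro j hj k hk hjk
    refine Set.disjoint_left.mpr fun z hzj hzk => ?_
    have hjz := mem_closedBall_iff_norm.mp hzj
    have hkz := mem_closedBall_iff_norm.mp hzk
    have hsep : ‖((j:ℝ) * (1/R)) • u - ((k:ℝ) * (1/R)) • u‖ = |(j:ℝ) - k| * (1/R) := by
      rw [← sub_smul, norm_smul, hu, mul_one, Real.norm_eq_abs, ← sub_mul, abs_mul,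
        abs_of_pos (by positivity : (0:ℝ) < 1/R)]
    have hone : (1:ℝ) ≤ |(j:ℝ) - k| := by
      have hne : (j:ℤ) - k ≠ 0 := sub_ne_zero.mpr (by exact_mod_cast hjk)
      have h1 : (1:ℤ) ≤ |(j:ℤ) - k| := Int.one_le_abs hne
      have h2 : ((|(j:ℤ) - k| : ℤ) : ℝ) = |(j:ℝ) - k| := by push_cast; rfl
      rw [← h2]; exact_mod_cast h1
    have htri : ‖((j:ℝ) * (1/R)) • u - ((k:ℝ) * (1/R)) • u‖ ≤ 2 * r := by
      have h1 : ((j:ℝ) * (1/R)) • u - ((k:ℝ) * (1/R)) • u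
          = (((j:ℝ) * (1/R)) • u - z) + (z - ((k:ℝ) * (1/R)) • u) := by abel
      rw [h1]
      calc ‖(((j:ℝ) * (1/R)) • u - z) + (z - ((k:ℝ) * (1/R)) • u)‖
          ≤ ‖((j:ℝ) * (1/R)) • u - z‖ + ‖z - ((k:ℝ) * (1/R)) • u‖ := norm_add_le _ _
        _ ≤ r + r := by rw [norm_sub_rev]; exact add_le_add hjz hkz
        _ = 2 * r := by ring
    have h1R : (1:ℝ)/R ≤ |(j:ℝ) - k| * (1/R) :=
      le_mul_of_one_le_left (by positivity) hone
    have h2r : 2 * r < 1/R := by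
      rw [hr]
      rw [show 2 * (1 / (4 * R)) = 1 / (2 * R) by field_simp; ring]
      apply div_lt_div_of_pos_left one_pos (by positivity)
      linarith
    rw [hsep] at htri
    linarith
  -- volume count
  have hsum : ∑ k ∈ Finset.range N, volume (B k) = volume (⋃ k ∈ Finset.range N, B k) :=
    (measure_biUnion_finset hdisj fun k _ => measurableSet_closedBall).symm
  have hsub2 : (⋃ k ∈ Finset.range N, B k) ⊆ polarBody L := by
    refine iUnion₂_subset fun k hk => hBsub k (Finset.mem_range.mp hk)
  have hBk : ∀ k, volume (B k) = ENNReal.ofReal (r ^ n) * unitBallVol n := by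
    intro k
    rw [hB]
    rw [Measure.addHaar_closedBall' volume _ hrpos.le, finrank_euclideanSpace_fin]
    rfl
  have hle : (N : ℝ≥0∞) * (ENNReal.ofReal (r ^ n) * unitBallVol n) ≤ unitBallVol n := by
    calc (N : ℝ≥0∞) * (ENNReal.ofReal (r ^ n) * unitBallVol n)
        = ∑ k ∈ Finset.range N, volume (B k) := by
          rw [Finset.sum_congr rfl fun k _ => hBk k, Finset.sum_const, Finset.card_range,
            nsmul_eq_mul]
      _ = volume (⋃ k ∈ Finset.range N, B k) := hsum
      _ ≤ volume (polarBody L) := measure_mono hsub2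
      _ = unitBallVol n := hvol
  have hω0 : unitBallVol n ≠ 0 := (measure_closedBall_pos volume _ one_pos).ne'
  have hωtop : unitBallVol n ≠ ⊤ := measure_closedBall_lt_top.ne
  have hle2 : (N : ℝ≥0∞) * ENNReal.ofReal (r ^ n) ≤ 1 := by
    rw [← ENNReal.mul_le_mul_iff_left hω0 hωtop, one_mul, mul_assoc]
    exact hle
  have hle3 : (N : ℝ) * r ^ n ≤ 1 := by
    have h1 : (N : ℝ≥0∞) * ENNReal.ofReal (r ^ n) = ENNReal.ofReal ((N:ℝ) * r ^ n) := by
      rw [ENNReal.ofReal_mul (by positivity), ENNReal.ofReal_natCast]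
    rw [h1, ENNReal.ofReal_le_one] at hle2
    exact hle2
  have hDh : D * h = 1 := by rw [hD, one_div, inv_mul_cancel₀ hhpos.ne']
  have hrn : (0:ℝ) < r ^ n := by positivity
  have hkey : D * R / 2 * r ^ n ≤ 1 := by
    calc D * R / 2 * r ^ n ≤ (N:ℝ) * r ^ n := mul_le_mul_of_nonneg_right hNge hrn.le
      _ ≤ 1 := hle3
  nlinarith [mul_pos hDpos hhpos, mul_pos (mul_pos hDpos hR) hrn]

lemma gw_continuous {n : ℕ} (w : E n) :
    Continuous (fun u : Sph n => max (inner ℝ (u : E n) w : ℝ) 0) :=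
  ((continuous_subtype_val.inner continuous_const).max continuous_const)

lemma gw_integrable {n : ℕ} (w : E n) (ν : Measure (Sph n)) [IsFiniteMeasure ν] :
    Integrable (fun u : Sph n => max (inner ℝ (u : E n) w : ℝ) 0) ν := by
  refine (gw_continuous w).integrable_of_hasCompactSupport ?_
  exact IsCompact.of_isClosed_subset CompactSpace.isCompact_univ (isClosed_tsupport _)
    (subset_univ _)

lemma gw_lipschitz {n : ℕ} (ν : Measure (Sph n)) [IsFiniteMeasure ν] (v w : E n) :
    |(∫ u : Sph n, max (inner ℝ (u : E n) v : ℝ) 0 ∂ν)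
      - ∫ u : Sph n, max (inner ℝ (u : E n) w : ℝ) 0 ∂ν| ≤ ‖v - w‖ * (ν univ).toReal := by
  rw [← integral_sub (gw_integrable v ν) (gw_integrable w ν)]
  rw [← Real.norm_eq_abs]
  refine norm_integral_le_of_norm_le_const ?_
  filter_upwards with u
  rw [Real.norm_eq_abs]
  have h1 : |max (inner ℝ (u : E n) v : ℝ) 0 - max (inner ℝ (u : E n) w : ℝ) 0|
      ≤ |(inner ℝ (u : E n) v : ℝ) - inner ℝ (u : E n) w| := abs_max_sub_max_le_abs _ _ _
  have h2 : (inner ℝ (u : E n) v : ℝ) - inner ℝ (u : E n) w = inner ℝ (u : E n) (v - w) := by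
    rw [inner_sub_right]
  have h3 : |(inner ℝ (u : E n) (v - w) : ℝ)| ≤ ‖(u : E n)‖ * ‖v - w‖ := abs_real_inner_le_norm _ _
  rw [sph_norm u, one_mul] at h3
  rw [h2] at h1
  linarith

lemma uniform_conc {n : ℕ} (hn : 0 < n) (μs : ℕ → Measure (Sph n)) (μ : Measure (Sph n))
    [∀ i, IsFiniteMeasure (μs i)] [IsFiniteMeasure μ]
    (hconc : ∀ v : Sph n, 0 < ∫ u : Sph n, max (inner ℝ (u : E n) (v : E n) : ℝ) 0 ∂μ)
    (hweak : ∀ g : Sph n → ℝ, Continuous g →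
      Tendsto (fun i => ∫ u, g u ∂(μs i)) atTop (nhds (∫ u, g u ∂μ))) :
    ∃ a > 0, ∃ t > 0, ∀ᶠ i in atTop, ∀ w : E n, ‖w‖ = 1 →
      a ≤ (∫ u : Sph n, max (inner ℝ (u : E n) w : ℝ) 0 ∂(μs i))
        - t * ((μs i) univ).toReal := by
  haveI : Nontrivial (E n) := by
    exact Module.nontrivial_of_finrank_pos (R := ℝ)
      (by rw [finrank_euclideanSpace_fin]; exact hn)
  -- F ν w
  set F : Measure (Sph n) → E n → ℝ :=
    fun ν w => ∫ u : Sph n, max (inner ℝ (u : E n) w : ℝ) 0 ∂ν with hF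
  -- continuity of F μ
  have hFcont : Continuous (F μ) := by
    rw [Metric.continuous_iff]
    intro v ε hε
    rcases eq_or_lt_of_le (ENNReal.toReal_nonneg (a := μ univ)) with hB | hB
    · exact ⟨1, one_pos, fun w _ => by
        have := gw_lipschitz μ w v
        rw [← hB, mul_zero] at this
        rw [Real.dist_eq]
        have := abs_nonneg ((F μ w) - F μ v)
        calc |F μ w - F μ v| ≤ 0 := by rw [hF]; exact gw_lipschitz μ w v |>.trans (by rw [← hB]; ring_nf; exact le_refl _)
          _ < ε := hε⟩
    · refine ⟨ε / (μ univ).toReal, by positivity, fun w hw => ?_⟩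
      rw [Real.dist_eq]
      calc |F μ w - F μ v| ≤ ‖w - v‖ * (μ univ).toReal := gw_lipschitz μ w v
        _ < (ε / (μ univ).toReal) * (μ univ).toReal := by
            apply mul_lt_mul_of_pos_right _ hB
            rwa [← dist_eq_norm]
        _ = ε := by field_simp
  -- minimum of F μ on the sphere
  have hsph : (sphere (0 : E n) 1).Nonempty := NormedSpace.sphere_nonempty.mpr one_pos.le
  obtain ⟨v₀, hv₀mem, hv₀min⟩ := (isCompact_sphere (0 : E n) 1).exists_isMinOn hsph
    hFcont.continuousOn
  set c : ℝ := F μ v₀ with hc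
  have hcpos : 0 < c := by
    have := hconc ⟨v₀, hv₀mem⟩
    exact this
  have hcle : ∀ w ∈ sphere (0 : E n) 1, c ≤ F μ w := fun w hw => hv₀min hw
  set B : ℝ := (μ univ).toReal with hB
  have hBnn : 0 ≤ B := ENNReal.toReal_nonneg
  set t : ℝ := c / (4 * (B + 1)) with ht
  have htpos : 0 < t := by positivity
  set δ : ℝ := c / (8 * (B + 1)) with hδ
  have hδpos : 0 < δ := by positivity
  -- finite net
  obtain ⟨net, hnetsub, hnetfin, hnetcov⟩ : ∃ s : Set (E n), s ⊆ sphere (0 : E n) 1 ∧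
      s.Finite ∧ sphere (0 : E n) 1 ⊆ ⋃ y ∈ s, ball y δ :=
    finite_approx_of_totallyBounded (isCompact_sphere (0 : E n) 1).totallyBounded δ hδpos
  -- mass convergence
  have hmass : Tendsto (fun i => ((μs i) univ).toReal) atTop (nhds B) := by
    have h1 := hweak (fun _ => (1:ℝ)) continuous_const
    simp at h1; exact h1
  have hmassev : ∀ᶠ i in atTop, ((μs i) univ).toReal ≤ B + 1 :=
    (hmass.eventually_lt_const (by linarith)).mono fun i h => h.le
  -- net convergence
  have hnetev : ∀ᶠ i in atTop, ∀ y ∈ net, 7 * c / 8 ≤ F (μs i) y := by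
    refine (eventually_all_finite hnetfin).mpr fun y hy => ?_
    have h1 : Tendsto (fun i => F (μs i) y) atTop (nhds (F μ y)) :=
      hweak _ (gw_continuous y)
    have h2 : 7 * c / 8 < F μ y := lt_of_lt_of_le (by linarith) (hcle y (hnetsub hy))
    exact (h1.eventually_const_lt h2).mono fun i h => h.le
  refine ⟨c/2, by positivity, t, htpos, ?_⟩
  filter_upwards [hmassev, hnetev] with i hm hnet
  intro w hw
  obtain ⟨y, hy, hwy⟩ : ∃ y ∈ net, w ∈ ball y δ := by
    have := hnetcov (mem_sphere_zero_iff_norm.mpr hw)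
    simpa using this
  have hdist : ‖w - y‖ < δ := by
    have := mem_ball_iff_norm.mp hwy
    linarith [this]
  have hlip := gw_lipschitz (μs i) w y
  have hFiy := hnet y hy
  have hFw : F (μs i) w ≥ F (μs i) y - ‖w - y‖ * ((μs i) univ).toReal := by
    have := abs_sub_abs_le_abs_sub (F (μs i) w) (F (μs i) y)
    have h3 := (abs_le.mp hlip).1
    rw [hF]; dsimp only; linarith [h3]
  have hmub : ‖w - y‖ * ((μs i) univ).toReal ≤ δ * (B + 1) := by
    apply mul_le_mul hdist.le hm (ENNReal.toReal_nonneg) hδpos.le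
  have htb : t * ((μs i) univ).toReal ≤ t * (B + 1) :=
    mul_le_mul_of_nonneg_left hm htpos.le
  have hδB : δ * (B + 1) = c / 8 := by rw [hδ]; field_simp
  have htB : t * (B + 1) = c / 4 := by rw [ht]; field_simp
  have : F (μs i) w ≥ 7 * c / 8 - c / 8 := by
    rw [← hδB]
    linarith
  linarith

lemma cont_integrable {n : ℕ} {f : Sph n → ℝ} (hf : Continuous f) (ν : Measure (Sph n))
    [IsFiniteMeasure ν] : Integrable f ν :=
  hf.integrable_of_hasCompactSupport
    (IsCompact.of_isClosed_subset CompactSpace.isCompact_univ (isClosed_tsupport _)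
      (subset_univ _))

lemma uniform_weak {n : ℕ} (μs : ℕ → Measure (Sph n)) (μ : Measure (Sph n))
    [∀ i, IsFiniteMeasure (μs i)] [IsFiniteMeasure μ]
    (hweak : ∀ g : Sph n → ℝ, Continuous g →
      Tendsto (fun i => ∫ u, g u ∂(μs i)) atTop (nhds (∫ u, g u ∂μ)))
    {M δ ε' : ℝ} (hM : 0 ≤ M) (hδ : 0 < δ) (hε' : 0 < ε') :
    ∀ᶠ i in atTop, ∀ f : Sph n → ℝ, Continuous f → (∀ u, |f u| ≤ M) →
      (∀ u v : Sph n, dist u v ≤ δ → |f u - f v| ≤ ε') →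
      |(∫ u, f u ∂(μs i)) - ∫ u, f u ∂μ| ≤ ε' * (2 * (μ univ).toReal + 2) := by
  obtain ⟨net, hnetfin, hnetcov⟩ : ∃ s : Set (Sph n), s.Finite ∧
      (univ : Set (Sph n)) ⊆ ⋃ y ∈ s, ball y (δ/2) := by
    have := CompactSpace.isCompact_univ (X := Sph n) |>.totallyBounded
    rw [Metric.totallyBounded_iff] at this
    exact this (δ/2) (by positivity)
  set sF : Finset (Sph n) := hnetfin.toFinset with hsF
  set ψ : Sph n → Sph n → ℝ := fun y u => max (δ - dist u y) 0 with hψ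
  have hψcont : ∀ y, Continuous (ψ y) :=
    fun y => ((continuous_const.sub (continuous_id.dist continuous_const)).max continuous_const)
  have hψnn : ∀ y u, 0 ≤ ψ y u := fun y u => le_max_right _ _
  set S : Sph n → ℝ := fun u => ∑ y ∈ sF, ψ y u with hS
  have hScont : Continuous S := continuous_finset_sum _ fun y _ => hψcont y
  have hSpos : ∀ u, 0 < S u := by
    intro u
    obtain ⟨y, hy, hmem⟩ : ∃ y ∈ net, u ∈ ball y (δ/2) := by
      have := hnetcov (mem_univ u); simpa using this
    refine Finset.sum_pos' (fun y _ => hψnn y u) ⟨y, hnetfin.mem_toFinset.mpr hy, ?_⟩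
    have : dist u y < δ/2 := mem_ball.mp hmem
    have : δ - dist u y > 0 := by linarith
    simp only [hψ]; rw [max_eq_left (by linarith)]; linarith
  set χ : Sph n → Sph n → ℝ := fun y u => ψ y u / S u with hχ
  have hχcont : ∀ y, Continuous (χ y) := fun y => (hψcont y).div hScont fun u => (hSpos u).ne'
  have hχnn : ∀ y u, 0 ≤ χ y u := fun y u => div_nonneg (hψnn y u) (hSpos u).le
  have hχsum : ∀ u, ∑ y ∈ sF, χ y u = 1 := by
    intro u
    rw [hχ]
    simp only
    rw [← Finset.sum_div]
    exact div_self (hSpos u).ne'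
  have hχsupp : ∀ y u, χ y u ≠ 0 → dist u y < δ := by
    intro y u h
    by_contra hcon
    push_neg at hcon
    apply h
    have : ψ y u = 0 := by
      simp only [hψ]; rw [max_eq_right (by linarith)]
    simp only [hχ, this, zero_div]
  -- convergence of the finitely many test integrals
  have hDsum : Tendsto (fun i => ∑ y ∈ sF, |(∫ u, χ y u ∂(μs i)) - ∫ u, χ y u ∂μ|)
      atTop (nhds 0) := by
    have h0 : (0:ℝ) = ∑ y ∈ sF, (0:ℝ) := by simp
    rw [h0]
    refine tendsto_finset_sum _ fun y _ => ?_
    have h1 := (hweak _ (hχcont y)).sub (tendsto_const_nhds (x := ∫ u, χ y u ∂μ))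
    rw [sub_self] at h1
    have h2 := h1.abs
    rwa [abs_zero] at h2
  have hDev : ∀ᶠ i in atTop, ∑ y ∈ sF, |(∫ u, χ y u ∂(μs i)) - ∫ u, χ y u ∂μ| ≤ ε'/(M+1) :=
    (hDsum.eventually_lt_const (by positivity)).mono fun i h => h.le
  have hmass : Tendsto (fun i => ((μs i) univ).toReal) atTop (nhds ((μ univ).toReal)) := by
    have h1 := hweak (fun _ => (1:ℝ)) continuous_const
    simp at h1; exact h1
  have hmassev : ∀ᶠ i in atTop, ((μs i) univ).toReal ≤ (μ univ).toReal + 1 :=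
    (hmass.eventually_lt_const (by linarith)).mono fun i h => h.le
  filter_upwards [hDev, hmassev] with i hD hm
  intro f hfc hfM hfmod
  -- pointwise approximation
  have happrox : ∀ u, |f u - ∑ y ∈ sF, f y * χ y u| ≤ ε' := by
    intro u
    have h1 : f u - ∑ y ∈ sF, f y * χ y u = ∑ y ∈ sF, (f u - f y) * χ y u := by
      rw [Finset.sum_congr rfl fun y _ => sub_mul (f u) (f y) (χ y u),
        Finset.sum_sub_distrib, ← Finset.mul_sum, hχsum u, mul_one]
    rw [h1]
    calc |∑ y ∈ sF, (f u - f y) * χ y u| ≤ ∑ y ∈ sF, |(f u - f y) * χ y u| :=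
          Finset.abs_sum_le_sum_abs _ _
      _ ≤ ∑ y ∈ sF, ε' * χ y u := by
          refine Finset.sum_le_sum fun y _ => ?_
          rw [abs_mul, abs_of_nonneg (hχnn y u)]
          rcases eq_or_ne (χ y u) 0 with h0 | h0
          · rw [h0]; simp
          · exact mul_le_mul_of_nonneg_right (hfmod u y (hχsupp y u h0).le) (hχnn y u)
      _ = ε' := by rw [← Finset.mul_sum, hχsum u, mul_one]
  -- integral comparison for a fixed measure
  have hcompare : ∀ (ν : Measure (Sph n)) [IsFiniteMeasure ν],
      |(∫ u, f u ∂ν) - ∑ y ∈ sF, f y * ∫ u, χ y u ∂ν| ≤ ε' * (ν univ).toReal := by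
    intro ν _
    have hg : Continuous (fun u => ∑ y ∈ sF, f y * χ y u) :=
      continuous_finset_sum _ fun y _ => continuous_const.mul (hχcont y)
    have h1 : ∑ y ∈ sF, f y * ∫ u, χ y u ∂ν = ∫ u, (∑ y ∈ sF, f y * χ y u) ∂ν := by
      rw [integral_finset_sum _ fun y _ => (show Integrable (fun u => f y * χ y u) ν from (continuous_const.mul (hχcont y)).integrable_of_hasCompactSupport
        (IsCompact.of_isClosed_subset CompactSpace.isCompact_univ (isClosed_tsupport _) (subset_univ _)))]
      exact Finset.sum_congr rfl fun y _ => (integral_const_mul _ _).symm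
    rw [h1, ← integral_sub (cont_integrable hfc ν) (cont_integrable hg ν), ← Real.norm_eq_abs]
    refine norm_integral_le_of_norm_le_const ?_
    filter_upwards with u
    rw [Real.norm_eq_abs]
    exact happrox u
  have hμi := hcompare (μs i)
  have hμ' := hcompare μ
  -- middle term
  have hmid : |∑ y ∈ sF, f y * (∫ u, χ y u ∂(μs i)) - ∑ y ∈ sF, f y * ∫ u, χ y u ∂μ| ≤ ε' := by
    rw [← Finset.sum_sub_distrib]
    calc |∑ y ∈ sF, (f y * (∫ u, χ y u ∂(μs i)) - f y * ∫ u, χ y u ∂μ)|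
        ≤ ∑ y ∈ sF, |f y * (∫ u, χ y u ∂(μs i)) - f y * ∫ u, χ y u ∂μ| :=
          Finset.abs_sum_le_sum_abs _ _
      _ = ∑ y ∈ sF, |f y| * |(∫ u, χ y u ∂(μs i)) - ∫ u, χ y u ∂μ| := by
          refine Finset.sum_congr rfl fun y _ => ?_
          rw [← mul_sub, abs_mul]
      _ ≤ ∑ y ∈ sF, M * |(∫ u, χ y u ∂(μs i)) - ∫ u, χ y u ∂μ| :=
          Finset.sum_le_sum fun y _ => mul_le_mul_of_nonneg_right (hfM y) (abs_nonneg _)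
      _ = M * ∑ y ∈ sF, |(∫ u, χ y u ∂(μs i)) - ∫ u, χ y u ∂μ| := by rw [Finset.mul_sum]
      _ ≤ M * (ε'/(M+1)) := mul_le_mul_of_nonneg_left hD hM
      _ ≤ ε' := by
          rw [div_eq_inv_mul, ← mul_assoc]
          have h1 : M * (M+1)⁻¹ ≤ 1 := by
            rw [mul_inv_le_iff₀ (by linarith), one_mul]; linarith
          nlinarith
  have htotal := abs_sub_le ((∫ u, f u ∂(μs i))) (∑ y ∈ sF, f y * ∫ u, χ y u ∂(μs i))
    (∫ u, f u ∂μ)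
  have htotal2 := abs_sub_le (∑ y ∈ sF, f y * ∫ u, χ y u ∂(μs i))
    (∑ y ∈ sF, f y * ∫ u, χ y u ∂μ) (∫ u, f u ∂μ)
  have h3 : |∑ y ∈ sF, f y * ∫ u, χ y u ∂μ - ∫ u, f u ∂μ| ≤ ε' * (μ univ).toReal := by
    rw [abs_sub_comm]; exact hμ'
  have h4 : ε' * ((μs i) univ).toReal ≤ ε' * ((μ univ).toReal + 1) :=
    mul_le_mul_of_nonneg_left hm hε'.le
  calc |(∫ u, f u ∂(μs i)) - ∫ u, f u ∂μ|
      ≤ |(∫ u, f u ∂(μs i)) - ∑ y ∈ sF, f y * ∫ u, χ y u ∂(μs i)|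
        + |∑ y ∈ sF, f y * ∫ u, χ y u ∂(μs i) - ∫ u, f u ∂μ| := htotal
    _ ≤ ε' * ((μs i) univ).toReal + (ε' + ε' * (μ univ).toReal) := by
        have := le_trans htotal2 (add_le_add hmid h3)
        exact add_le_add hμi this
    _ ≤ ε' * (2 * (μ univ).toReal + 2) := by linarith

lemma body_bound {n : ℕ} {φ : ℝ → ℝ} (hφmono : StrictMonoOn φ (Ioi 0))
    (hφpos : ∀ t ∈ Ioi (0:ℝ), 0 < φ t) (hφc : ContinuousOn φ (Ioi 0))
    (ν : Measure (Sph n)) [IsFiniteMeasure ν] {L : Set (E n)} (hL : IsBody L)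
    {t a C T₀ : ℝ} (ht : 0 < t) (ha : 0 < a) (hT₀ : 0 < T₀)
    (hν : ∀ w : E n, ‖w‖ = 1 →
      a ≤ (∫ u : Sph n, max (inner ℝ (u : E n) w : ℝ) 0 ∂ν) - t * (ν univ).toReal)
    (hFC : (∫ u : Sph n, φ (supportFn L (u : E n)) ∂ν) ≤ C)
    (hT : ∀ s, T₀ ≤ s → C / a < φ s)
    (he : ∃ e : E n, ‖e‖ = 1) :
    L ⊆ closedBall (0 : E n) (T₀ / t) := by
  obtain ⟨xs, hxsL, hxsmax⟩ := hL.1.exists_isMaxOn hL.nonempty continuous_norm.continuousOn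
  set d : ℝ := ‖xs‖ with hdd
  have hd : ∀ x ∈ L, ‖x‖ ≤ d := fun x hx => hxsmax hx
  obtain ⟨ε, hε, hball⟩ := hL.exists_ball
  obtain ⟨e, he1⟩ := he
  have hdpos : 0 < d := by
    have h1 : ε • e ∈ L := hball (by
      rw [mem_closedBall_zero_iff, norm_smul, he1, mul_one, Real.norm_eq_abs,
        abs_of_pos hε])
    have := hd _ h1
    rw [norm_smul, he1, mul_one, Real.norm_eq_abs, abs_of_pos hε] at this
    linarith
  set w : E n := d⁻¹ • xs with hw
  have hwnorm : ‖w‖ = 1 := by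
    rw [hw, norm_smul, Real.norm_eq_abs, abs_of_pos (by positivity), ← hdd,
      inv_mul_cancel₀ hdpos.ne']
  have hdw : d • w = xs := by
    rw [hw, smul_smul, mul_inv_cancel₀ hdpos.ne', one_smul]
  have hdtpos : 0 < d * t := by positivity
  -- pointwise inequality
  have hpt : ∀ u : Sph n, φ (d * t) * (max (inner ℝ (u : E n) w : ℝ) 0 - t)
      ≤ φ (supportFn L (u : E n)) := by
    intro u
    set g : ℝ := max (inner ℝ (u : E n) w : ℝ) 0 with hg
    have hφdt : 0 < φ (d * t) := hφpos _ hdtpos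
    have hhu : 0 < supportFn L (u : E n) := supportFn_pos_on_sph hL u
    rcases le_or_gt g t with hgt | hgt
    · have h1 : φ (d * t) * (g - t) ≤ 0 :=
        mul_nonpos_of_nonneg_of_nonpos hφdt.le (by linarith)
      exact h1.trans (hφpos _ hhu).le
    · have hgin : g = (inner ℝ (u : E n) w : ℝ) := by
        rw [hg]
        rcases max_cases (inner ℝ (u : E n) w : ℝ) 0 with ⟨h1, h2⟩ | ⟨h1, h2⟩
        · exact h1
        · exfalso; rw [hg] at hgt; linarith
      have h2 : d * g ≤ supportFn L (u : E n) := by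
        have h3 : (inner ℝ xs (u : E n) : ℝ) ≤ supportFn L (u : E n) :=
          inner_le_supportFn hL.1 hxsL _
        have h4 : (inner ℝ xs (u : E n) : ℝ) = d * g := by
          rw [hgin, ← hdw, real_inner_smul_left, real_inner_comm]
        linarith
      have h5 : d * t ≤ d * g := mul_le_mul_of_nonneg_left hgt.le hdpos.le
      have h6 : φ (d * t) ≤ φ (supportFn L (u : E n)) := by
        rcases eq_or_lt_of_le (h5.trans h2) with heq | hlt
        · rw [heq]
        · exact (hφmono hdtpos (by linarith : (0:ℝ) < supportFn L (u:E n)) hlt).le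
      have h7 : g ≤ 1 := by
        rw [hgin]
        calc (inner ℝ (u : E n) w : ℝ) ≤ ‖(u : E n)‖ * ‖w‖ := real_inner_le_norm _ _
          _ = 1 := by rw [sph_norm u, hwnorm, mul_one]
      calc φ (d * t) * (g - t) ≤ φ (d * t) * 1 :=
            mul_le_mul_of_nonneg_left (by linarith) hφdt.le
        _ = φ (d * t) := mul_one _
        _ ≤ φ (supportFn L (u : E n)) := h6
  -- integrate
  have hint1 : Integrable (fun u : Sph n =>
      φ (d * t) * (max (inner ℝ (u : E n) w : ℝ) 0 - t)) ν :=
    (((gw_integrable w ν).sub (integrable_const t)).const_mul _)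
  have hint2 : Integrable (fun u : Sph n => φ (supportFn L (u : E n))) ν :=
    integrand_integrable hφc hL ν
  have hmono := integral_mono hint1 hint2 hpt
  have hcalc : (∫ u : Sph n, φ (d * t) * (max (inner ℝ (u : E n) w : ℝ) 0 - t) ∂ν)
      = φ (d * t) * ((∫ u : Sph n, max (inner ℝ (u : E n) w : ℝ) 0 ∂ν)
        - t * (ν univ).toReal) := by
    rw [integral_const_mul, integral_sub (gw_integrable w ν) (integrable_const t),
      integral_const]
    simp [smul_eq_mul, mul_comm]
    exact Or.inl (Or.inl rfl)
  have hkey : φ (d * t) * a ≤ C := by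
    have h1 := hν w hwnorm
    have h2 : φ (d * t) * a ≤ φ (d * t) * ((∫ u : Sph n, max (inner ℝ (u : E n) w : ℝ) 0 ∂ν)
        - t * (ν univ).toReal) := mul_le_mul_of_nonneg_left h1 (hφpos _ hdtpos).le
    rw [← hcalc] at h2
    linarith
  have hdT : d * t < T₀ := by
    by_contra hcon
    push_neg at hcon
    have := hT _ hcon
    have h1 : C < φ (d * t) * a := by
      rw [div_lt_iff₀ ha] at this
      linarith
    linarith
  have hdlt : d ≤ T₀ / t := by
    rw [le_div_iff₀ ht]; linarith
  exact fun x hx => mem_closedBall_zero_iff.mpr ((hd x hx).trans hdlt)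

theorem Ghat_weakly_continuous {n : ℕ}
    (φ : ℝ → ℝ) (hφc : ContinuousOn φ (Ioi 0)) (hφmono : StrictMonoOn φ (Ioi 0))
    (hφpos : ∀ t ∈ Ioi (0 : ℝ), 0 < φ t)
    (hφ0 : Tendsto φ (nhdsWithin 0 (Ioi 0)) (nhds 0))
    (hφ1 : φ 1 = 1) (hφtop : Tendsto φ atTop atTop)
    (μs : ℕ → Measure (Sph n)) (μ : Measure (Sph n))
    [∀ i, IsFiniteMeasure (μs i)] [IsFiniteMeasure μ]
    (hμs : ∀ i, μs i ≠ 0) (hμ : μ ≠ 0)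
    (hconcs : ∀ i, ∀ v : Sph n,
      0 < ∫ u : Sph n, max (inner ℝ (u : E n) (v : E n) : ℝ) 0 ∂(μs i))
    (hconc : ∀ v : Sph n, 0 < ∫ u : Sph n, max (inner ℝ (u : E n) (v : E n) : ℝ) 0 ∂μ)
    (hweak : ∀ g : Sph n → ℝ, Continuous g →
      Tendsto (fun i => ∫ u, g u ∂(μs i)) atTop (nhds (∫ u, g u ∂μ))) :
    Tendsto (fun i => Ghat φ (μs i)) atTop (nhds (Ghat φ μ)) := by
  rcases Nat.eq_zero_or_pos n with hn0 | hn
  · -- degenerate case: the sphere is empty, contradicting μ ≠ 0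
    exfalso
    apply hμ
    have hemp : IsEmpty (Sph n) := by
      subst hn0
      constructor
      rintro ⟨x, hx⟩
      have hx0 : x = 0 := by
        ext i
        exact absurd i.isLt (by omega)
      rw [mem_sphere_zero_iff_norm, hx0, norm_zero] at hx
      norm_num at hx
    ext s hs
    rw [Set.eq_empty_of_isEmpty s]
    simp
  haveI : Nontrivial (E n) :=
    Module.nontrivial_of_finrank_pos (R := ℝ) (by rw [finrank_euclideanSpace_fin]; exact hn)
  have he : ∃ e : E n, ‖e‖ = 1 := by
    have hsph : (sphere (0 : E n) 1).Nonempty := NormedSpace.sphere_nonempty.mpr zero_le_one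
    obtain ⟨e, heme⟩ := hsph
    exact ⟨e, mem_sphere_zero_iff_norm.mp heme⟩
  obtain ⟨a, ha, t, ht, hconcev⟩ := uniform_conc hn μs μ hconc hweak
  rw [Metric.tendsto_atTop]
  intro ε hε
  -- upper bound part
  have hup : ∀ᶠ i in atTop, Ghat φ (μs i) < Ghat φ μ + ε/2 := by
    obtain ⟨x, hxmem, hxlt⟩ := exists_lt_of_csInf_lt (GhatSet_nonempty (φ := φ) μ)
      (lt_add_of_pos_right (Ghat φ μ) (by positivity : (0:ℝ) < ε/2))
    obtain ⟨L, hLbody, hLvol, rfl⟩ := hxmem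
    have htend := hweak (fun u : Sph n => φ (supportFn L (u : E n)))
      (integrand_continuous hφc hLbody)
    exact (htend.eventually_lt_const hxlt).mono fun i hi =>
      lt_of_le_of_lt (Ghat_le (μs i) hLbody hLvol hφpos) hi
  -- constants for the lower bound part
  set B : ℝ := (μ univ).toReal with hB
  have hBnn : 0 ≤ B := ENNReal.toReal_nonneg
  have hmass : Tendsto (fun i => ((μs i) univ).toReal) atTop (nhds B) := by
    have h1 := hweak (fun _ => (1:ℝ)) continuous_const
    simp at h1; exact h1
  have hmassev : ∀ᶠ i in atTop, ((μs i) univ).toReal ≤ B + 1 :=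
    (hmass.eventually_lt_const (by linarith)).mono fun i h => h.le
  set C : ℝ := B + 1 + ε with hC
  have hCpos : 0 < C := by positivity
  obtain ⟨T₁, hT₁⟩ := eventually_atTop.mp (hφtop.eventually_gt_atTop (C/a))
  set T₀ : ℝ := max T₁ 1 with hT₀def
  have hT₀pos : 0 < T₀ := lt_of_lt_of_le one_pos (le_max_right _ _)
  have hT₀prop : ∀ s, T₀ ≤ s → C/a < φ s := fun s hs =>
    hT₁ s ((le_max_left _ _).trans hs)
  set R : ℝ := max (T₀/t) 1 with hRdef
  have hR1 : 1 ≤ R := le_max_right _ _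
  have hRpos : 0 < R := lt_of_lt_of_le one_pos hR1
  set m₀ : ℝ := R * (1/(4*R))^n / 2 with hm₀def
  have hm₀pos : 0 < m₀ := by positivity
  have hm₀leR : m₀ ≤ R := by
    have h1 : (1/(4*R)) ≤ 1 := by
      rw [div_le_one (by positivity)]; linarith
    have h2 : (1/(4*R):ℝ)^n ≤ 1 := pow_le_one₀ (by positivity) h1
    have h3 : R * (1/(4*R))^n ≤ R * 1 := mul_le_mul_of_nonneg_left h2 hRpos.le
    rw [hm₀def]; linarith
  have hIccsub : Icc m₀ R ⊆ Ioi (0:ℝ) := fun s hs => lt_of_lt_of_le hm₀pos hs.1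
  set M : ℝ := φ R with hMdef
  have hMpos : 0 < M := hφpos R (mem_Ioi.mpr hRpos)
  set ε' : ℝ := ε/(4*(2*B+3)) with hε'def
  have hε'pos : 0 < ε' := by positivity
  have hε'bound : ε' * (2*B + 2) ≤ ε/4 := by
    have h1 : ε' * (2*B + 2) ≤ ε' * (2*B + 3) := by
      apply mul_le_mul_of_nonneg_left (by linarith) hε'pos.le
    have h2 : ε' * (2*B + 3) = ε/4 := by
      rw [hε'def]; field_simp
    linarith
  have hucont : UniformContinuousOn φ (Icc m₀ R) :=
    isCompact_Icc.uniformContinuousOn_of_continuous (hφc.mono hIccsub)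
  rw [Metric.uniformContinuousOn_iff] at hucont
  obtain ⟨δ₁, hδ₁pos, hδ₁prop⟩ := hucont ε' hε'pos
  set δ : ℝ := δ₁/(2*R) with hδdef
  have hδpos : 0 < δ := by positivity
  have hud := uniform_weak μs μ hweak (M := M) (δ := δ) (ε' := ε') hMpos.le hδpos hε'pos
  -- lower bound part
  have hlow : ∀ᶠ i in atTop, Ghat φ μ ≤ Ghat φ (μs i) + ε/2 := by
    filter_upwards [hconcev, hmassev, hud] with i hconci hmassi hudi
    obtain ⟨x, hxmem, hxlt⟩ := exists_lt_of_csInf_lt (GhatSet_nonempty (φ := φ) (μs i))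
      (lt_add_of_pos_right (Ghat φ (μs i)) (by positivity : (0:ℝ) < ε/4))
    obtain ⟨L, hLbody, hLvol, rfl⟩ := hxmem
    have hFiC : (∫ u : Sph n, φ (supportFn L (u : E n)) ∂(μs i)) ≤ C := by
      have h1 := Ghat_le_measure hφ1 hφpos (μs i)
      rw [hC]
      calc (∫ u : Sph n, φ (supportFn L (u : E n)) ∂(μs i))
          ≤ Ghat φ (μs i) + ε/4 := hxlt.le
        _ ≤ ((μs i) univ).toReal + ε/4 := by linarith
        _ ≤ B + 1 + ε := by linarith
    have hLsub' : L ⊆ closedBall (0 : E n) (T₀/t) :=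
      body_bound hφmono hφpos hφc (μs i) hLbody ht ha hT₀pos hconci hFiC hT₀prop he
    have hLsub : L ⊆ closedBall (0 : E n) R :=
      hLsub'.trans (closedBall_subset_closedBall (le_max_left _ _))
    have hhub : ∀ u : Sph n, supportFn L (u : E n) ≤ R := fun u =>
      supportFn_le_of_radius hLbody.nonempty hLsub (sph_norm u)
    have hhlb : ∀ u : Sph n, m₀ ≤ supportFn L (u : E n) := fun u =>
      supportFn_min_bound hn hRpos hR1 hLsub hLvol (sph_norm u)
        (fun x hx => inner_le_supportFn hLbody.1 hx _) (supportFn_pos_on_sph hLbody u)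
    set f : Sph n → ℝ := fun u => φ (supportFn L (u : E n)) with hf
    have hfc : Continuous f := integrand_continuous hφc hLbody
    have hfM : ∀ u, |f u| ≤ M := by
      intro u
      have h1 : 0 < f u := hφpos _ (supportFn_pos_on_sph hLbody u)
      rw [abs_of_pos h1]
      show φ (supportFn L (u : E n)) ≤ φ R
      rcases eq_or_lt_of_le (hhub u) with heq | hlt
      · rw [heq]
      · exact (hφmono (supportFn_pos_on_sph hLbody u) (mem_Ioi.mpr hRpos) hlt).le
    have hfmod : ∀ u v : Sph n, dist u v ≤ δ → |f u - f v| ≤ ε' := by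
      intro u v huv
      have hnd : ‖(u : E n) - (v : E n)‖ = dist u v := by
        rw [← dist_eq_norm, ← Subtype.dist_eq]
      have l1 := supportFn_lipschitz hLbody.1 hLbody.nonempty hLsub (u : E n) (v : E n)
      have l2 := supportFn_lipschitz hLbody.1 hLbody.nonempty hLsub (v : E n) (u : E n)
      rw [hnd] at l1
      have hnd2 : ‖(v : E n) - (u : E n)‖ = dist u v := by
        rw [← dist_eq_norm, ← Subtype.dist_eq, dist_comm]
      rw [hnd2] at l2
      have hdistbound : R * dist u v ≤ δ₁/2 := by
        have := mul_le_mul_of_nonneg_left huv hRpos.le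
        rw [hδdef] at this
        have h2 : R * (δ₁ / (2*R)) = δ₁/2 := by field_simp
        linarith
      have hsd : dist (supportFn L (u : E n)) (supportFn L (v : E n)) < δ₁ := by
        rw [Real.dist_eq, abs_sub_lt_iff]
        constructor <;> linarith
      have := hδ₁prop _ ⟨hhlb u, hhub u⟩ _ ⟨hhlb v, hhub v⟩ hsd
      rw [Real.dist_eq] at this
      exact this.le
    have happ := hudi f hfc hfM hfmod
    have hGle : Ghat φ μ ≤ ∫ u, f u ∂μ := Ghat_le μ hLbody hLvol hφpos
    have hchain : (∫ u, f u ∂μ) ≤ (∫ u, f u ∂(μs i)) + ε/4 := by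
      have h1 := (abs_le.mp happ).2
      have h2 : ε' * (2 * (μ univ).toReal + 2) ≤ ε/4 := by rw [← hB]; exact hε'bound
      linarith [(abs_le.mp happ).1]
    calc Ghat φ μ ≤ ∫ u, f u ∂μ := hGle
      _ ≤ (∫ u, f u ∂(μs i)) + ε/4 := hchain
      _ ≤ Ghat φ (μs i) + ε/4 + ε/4 := by linarith
      _ ≤ Ghat φ (μs i) + ε/2 := by linarith
  obtain ⟨N, hN⟩ := eventually_atTop.mp (hup.and hlow)
  refine ⟨N, fun i hi => ?_⟩
  obtain ⟨h1, h2⟩ := hN i hi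
  rw [Real.dist_eq, abs_sub_lt_iff]
  constructor <;> linarith
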